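/- Let f : ℝⁿ → ℝ be convex and continuous and suppose x₀ ∈ ℝⁿ is not a minimizer of f. Then the polar cone of the tangent cone of the sublevel set {x : f(x) ≤ f(x₀)} at x₀ equals cone(∂f(x₀)), the conic hull of the subdifferential of f at x₀. -/

import Mathlib

open Pointwise

noncomputable section

/-- The subdifferential of a convex function `f` at `x`. -/
def subdiff {n : ℕ} (f : EuclideanSpace ℝ (Fin n) → ℝ) (x : EuclideanSpace ℝ (Fin n)) :
    Set (EuclideanSpace ℝ (Fin n)) :=
  {s | ∀ y, f x + (inner ℝ s (y - x) : ℝ) ≤ f y}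

/-- The polar cone of a set `K`. -/
def polarCone {n : ℕ} (K : Set (EuclideanSpace ℝ (Fin n))) : Set (EuclideanSpace ℝ (Fin n)) :=
  {u | ∀ v ∈ K, (inner ℝ u v : ℝ) ≤ 0}

/-- The conic hull of a set `S`. -/
def coneHull {n : ℕ} (S : Set (EuclideanSpace ℝ (Fin n))) : Set (EuclideanSpace ℝ (Fin n)) :=
  {v | ∃ c : ℝ, 0 ≤ c ∧ ∃ s ∈ S, v = c • s}

/-- The tangent cone of a set `C` at `x`: closure of the cone of feasible directions. -/
def tangentConeOf {n : ℕ} (C : Set (EuclideanSpace ℝ (Fin n))) (x : EuclideanSpace ℝ (Fin n)) :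
    Set (EuclideanSpace ℝ (Fin n)) :=
  closure {v | ∃ c : ℝ, 0 ≤ c ∧ ∃ u, x + u ∈ C ∧ v = c • u}

namespace Stmt7Aux

variable {n : ℕ}

local notation "E" => EuclideanSpace ℝ (Fin n)

/-- difference quotient -/
def dq (f : E → ℝ) (x₀ w : E) (t : ℝ) : ℝ := (f (x₀ + t • w) - f x₀) / t

def ddset (f : E → ℝ) (x₀ w : E) : Set ℝ := dq f x₀ w '' Set.Ioi 0

/-- directional derivative -/
def dd (f : E → ℝ) (x₀ w : E) : ℝ := sInf (ddset f x₀ w)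

lemma dq_mono {f : E → ℝ} (hf : ConvexOn ℝ Set.univ f) (x₀ w : E) {s t : ℝ}
    (hs : 0 < s) (hst : s ≤ t) : dq f x₀ w s ≤ dq f x₀ w t := by
  have ht : 0 < t := hs.trans_le hst
  have hb : (0:ℝ) ≤ s / t := by positivity
  have ha : (0:ℝ) ≤ 1 - s / t := by
    have : s / t ≤ 1 := (div_le_one ht).2 hst
    linarith
  have hab : (1 - s/t) + s/t = 1 := by ring
  have hkey := hf.2 (Set.mem_univ x₀) (Set.mem_univ (x₀ + t • w)) ha hb hab
  have heq : (1 - s/t) • x₀ + (s/t) • (x₀ + t • w) = x₀ + s • w := by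
    rw [smul_add, smul_smul]
    have : s / t * t = s := div_mul_cancel₀ s ht.ne'
    rw [this]
    module
  rw [heq] at hkey
  simp only [smul_eq_mul] at hkey
  have h2 : f (x₀ + s • w) - f x₀ ≤ (s/t) * (f (x₀ + t • w) - f x₀) := by linarith [hkey]
  rw [dq, dq, div_le_div_iff₀ hs ht]
  have := mul_le_mul_of_nonneg_right h2 ht.le
  calc (f (x₀ + s • w) - f x₀) * t ≤ (s/t) * (f (x₀ + t • w) - f x₀) * t := this
    _ = (f (x₀ + t • w) - f x₀) * s := by field_simp

lemma dq_neg_add {f : E → ℝ} (hf : ConvexOn ℝ Set.univ f) (x₀ w : E) {t : ℝ} (ht : 0 < t) :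
    0 ≤ dq f x₀ w t + dq f x₀ (-w) t := by
  have hkey := hf.2 (Set.mem_univ (x₀ + t • w)) (Set.mem_univ (x₀ + t • (-w)))
    (by norm_num : (0:ℝ) ≤ 1/2) (by norm_num : (0:ℝ) ≤ 1/2) (by norm_num)
  have heq : (1/2 : ℝ) • (x₀ + t • w) + (1/2 : ℝ) • (x₀ + t • (-w)) = x₀ := by module
  rw [heq] at hkey
  simp only [smul_eq_mul] at hkey
  rw [dq, dq, ← add_div]
  apply div_nonneg _ ht.le
  linarith

lemma ddset_nonempty (f : E → ℝ) (x₀ w : E) : (ddset f x₀ w).Nonempty :=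
  ⟨dq f x₀ w 1, 1, by norm_num, rfl⟩

lemma dq_pair_nonneg {f : E → ℝ} (hf : ConvexOn ℝ Set.univ f) (x₀ w : E) {t₁ t₂ : ℝ}
    (h₁ : 0 < t₁) (h₂ : 0 < t₂) : 0 ≤ dq f x₀ w t₁ + dq f x₀ (-w) t₂ := by
  rcases le_total t₁ t₂ with h | h
  · have := dq_neg_add hf x₀ w h₁
    have := dq_mono hf x₀ (-w) h₁ h
    linarith
  · have := dq_neg_add hf x₀ w h₂
    have := dq_mono hf x₀ w h₂ h
    linarith

lemma ddset_bddBelow {f : E → ℝ} (hf : ConvexOn ℝ Set.univ f) (x₀ w : E) :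
    BddBelow (ddset f x₀ w) := by
  refine ⟨-dq f x₀ (-w) 1, ?_⟩
  rintro r ⟨t, ht, rfl⟩
  have := dq_pair_nonneg hf x₀ w (Set.mem_Ioi.1 ht) one_pos
  linarith

lemma dd_le_dq {f : E → ℝ} (hf : ConvexOn ℝ Set.univ f) (x₀ w : E) {t : ℝ} (ht : 0 < t) :
    dd f x₀ w ≤ dq f x₀ w t :=
  csInf_le (ddset_bddBelow hf x₀ w) ⟨t, ht, rfl⟩

lemma dd_zero (f : E → ℝ) (x₀ : E) : dd f x₀ 0 = 0 := by
  have h : ddset f x₀ 0 = {0} := by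
    apply Set.eq_singleton_iff_nonempty_unique_mem.2
    refine ⟨ddset_nonempty f x₀ 0, ?_⟩
    rintro r ⟨t, ht, rfl⟩
    simp [dq]
  rw [dd, h, csInf_singleton]

lemma dd_smul {f : E → ℝ} (x₀ w : E) {c : ℝ} (hc : 0 < c) :
    dd f x₀ (c • w) = c * dd f x₀ w := by
  have h : ddset f x₀ (c • w) = c • ddset f x₀ w := by
    ext r
    constructor
    · rintro ⟨t, ht, rfl⟩
      have ht' : 0 < t := Set.mem_Ioi.1 ht
      refine ⟨dq f x₀ w (t * c), ⟨t * c, Set.mem_Ioi.2 (by positivity), rfl⟩, ?_⟩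
      simp only [smul_eq_mul, dq, smul_smul]
      rw [eq_div_iff ht'.ne']
      field_simp
    · rintro ⟨r', ⟨t, ht, rfl⟩, rfl⟩
      have ht' : 0 < t := Set.mem_Ioi.1 ht
      refine ⟨t / c, Set.mem_Ioi.2 (by positivity), ?_⟩
      simp only [smul_eq_mul, dq, smul_smul]
      rw [div_mul_cancel₀ _ hc.ne']
      field_simp
  rw [dd, dd, h, Real.sInf_smul_of_nonneg hc.le, smul_eq_mul]

lemma dq_add {f : E → ℝ} (hf : ConvexOn ℝ Set.univ f) (x₀ w₁ w₂ : E) {t : ℝ} (ht : 0 < t) :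
    dq f x₀ (w₁ + w₂) t ≤ dq f x₀ w₁ (2 * t) + dq f x₀ w₂ (2 * t) := by
  have hkey := hf.2 (Set.mem_univ (x₀ + (2*t) • w₁)) (Set.mem_univ (x₀ + (2*t) • w₂))
    (by norm_num : (0:ℝ) ≤ 1/2) (by norm_num : (0:ℝ) ≤ 1/2) (by norm_num)
  have heq : (1/2 : ℝ) • (x₀ + (2*t) • w₁) + (1/2 : ℝ) • (x₀ + (2*t) • w₂)
      = x₀ + t • (w₁ + w₂) := by module
  rw [heq] at hkey
  simp only [smul_eq_mul] at hkey
  rw [dq, dq, dq, ← add_div, div_le_div_iff₀ ht (by linarith)]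
  nlinarith [hkey]

lemma dd_add {f : E → ℝ} (hf : ConvexOn ℝ Set.univ f) (x₀ w₁ w₂ : E) :
    dd f x₀ (w₁ + w₂) ≤ dd f x₀ w₁ + dd f x₀ w₂ := by
  have key : ∀ t₁ > (0:ℝ), ∀ t₂ > (0:ℝ),
      dd f x₀ (w₁ + w₂) ≤ dq f x₀ w₁ t₁ + dq f x₀ w₂ t₂ := by
    intro t₁ h₁ t₂ h₂
    set t := min t₁ t₂ / 2 with htdef
    have ht : 0 < t := by positivity
    have h2t₁ : 2 * t ≤ t₁ := by
      have := min_le_left t₁ t₂; rw [htdef]; linarith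
    have h2t₂ : 2 * t ≤ t₂ := by
      have := min_le_right t₁ t₂; rw [htdef]; linarith
    calc dd f x₀ (w₁ + w₂) ≤ dq f x₀ (w₁ + w₂) t := dd_le_dq hf x₀ _ ht
      _ ≤ dq f x₀ w₁ (2*t) + dq f x₀ w₂ (2*t) := dq_add hf x₀ w₁ w₂ ht
      _ ≤ dq f x₀ w₁ t₁ + dq f x₀ w₂ t₂ := by
          have := dq_mono hf x₀ w₁ (by positivity : (0:ℝ) < 2*t) h2t₁
          have := dq_mono hf x₀ w₂ (by positivity : (0:ℝ) < 2*t) h2t₂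
          linarith
  have h1 : dd f x₀ (w₁ + w₂) - dd f x₀ w₂ ≤ dd f x₀ w₁ := by
    apply le_csInf (ddset_nonempty f x₀ w₁)
    rintro b ⟨t₁, ht₁, rfl⟩
    have h2 : dd f x₀ (w₁ + w₂) - dq f x₀ w₁ t₁ ≤ dd f x₀ w₂ := by
      apply le_csInf (ddset_nonempty f x₀ w₂)
      rintro b ⟨t₂, ht₂, rfl⟩
      have := key t₁ (Set.mem_Ioi.1 ht₁) t₂ (Set.mem_Ioi.1 ht₂)
      linarith
    linarith
  linarith

lemma dd_neg {f : E → ℝ} (hf : ConvexOn ℝ Set.univ f) (x₀ w : E) :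
    0 ≤ dd f x₀ w + dd f x₀ (-w) := by
  have := dd_add hf x₀ w (-w)
  rw [add_neg_cancel, dd_zero] at this
  linarith

lemma mem_subdiff_iff {f : E → ℝ} (hf : ConvexOn ℝ Set.univ f) (x₀ s : E) :
    s ∈ subdiff f x₀ ↔ ∀ w, (inner ℝ s w : ℝ) ≤ dd f x₀ w := by
  constructor
  · intro hs w
    apply le_csInf (ddset_nonempty f x₀ w)
    rintro b ⟨t, ht, rfl⟩
    have ht' : (0:ℝ) < t := Set.mem_Ioi.1 ht
    have := hs (x₀ + t • w)
    rw [add_sub_cancel_left, real_inner_smul_right] at this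
    rw [dq, le_div_iff₀ ht']
    linarith
  · intro h y
    have h1 := h (y - x₀)
    have h2 : dd f x₀ (y - x₀) ≤ dq f x₀ (y - x₀) 1 := dd_le_dq hf x₀ _ one_pos
    rw [dq, one_smul, add_sub_cancel, div_one] at h2
    linarith

lemma exists_subdiff_inner_eq {f : E → ℝ} (hf : ConvexOn ℝ Set.univ f) (x₀ w : E)
    (hw : w ≠ 0) : ∃ s ∈ subdiff f x₀, (inner ℝ s w : ℝ) = dd f x₀ w := by
  set pm := LinearPMap.mkSpanSingleton (K := ℝ) (σ := RingHom.id ℝ) w (dd f x₀ w) hw with hpm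
  have hdom : ∀ x : pm.domain, ∃ c : ℝ, (x : E) = c • w := by
    intro x
    obtain ⟨c, hc⟩ := Submodule.mem_span_singleton.1 x.2
    exact ⟨c, hc.symm⟩
  have hple : ∀ x : pm.domain, pm x ≤ dd f x₀ (x : E) := by
    intro x
    obtain ⟨c, hc⟩ := hdom x
    have hx : pm x = c * dd f x₀ w := by
      have : pm ⟨c • w, by rw [← hc]; exact x.2⟩ = c • dd f x₀ w :=
        LinearPMap.mkSpanSingleton'_apply w (dd f x₀ w) _ c _
      rw [show x = (⟨c • w, by rw [← hc]; exact x.2⟩ : pm.domain) from Subtype.ext hc] at *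
      simpa using this
    rw [hx, hc]
    rcases lt_trichotomy c 0 with h | h | h
    · have heq : c • w = (-c) • (-w) := by module
      rw [heq, dd_smul x₀ (-w) (by linarith : (0:ℝ) < -c)]
      have := dd_neg hf x₀ w
      nlinarith
    · simp [h, dd_zero]
    · rw [dd_smul x₀ w h]
  obtain ⟨g, hg1, hg2⟩ := exists_extension_of_le_sublinear pm (dd f x₀)
    (fun c hc x => dd_smul x₀ x hc) (dd_add hf x₀) hple
  set s : E := (InnerProductSpace.toDual ℝ (EuclideanSpace ℝ (Fin n))).symm
    (LinearMap.toContinuousLinearMap g) with hs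
  have hinner : ∀ x : E, (inner ℝ s x : ℝ) = g x := fun x =>
    InnerProductSpace.toDual_symm_apply
  refine ⟨s, (mem_subdiff_iff hf x₀ s).2 fun v => by rw [hinner]; exact hg2 v, ?_⟩
  rw [hinner]
  have hwmem : w ∈ pm.domain := Submodule.mem_span_singleton_self w
  have := hg1 ⟨w, hwmem⟩
  rw [this]
  exact LinearPMap.mkSpanSingleton'_apply_self _ _ _ _

lemma subdiff_closed (f : E → ℝ) (x₀ : E) : IsClosed (subdiff f x₀) := by
  have : subdiff f x₀ = ⋂ y, {s : E | f x₀ + (inner ℝ s (y - x₀) : ℝ) ≤ f y} := by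
    ext s; simp [subdiff, Set.mem_iInter]
  rw [this]
  refine isClosed_iInter fun y => isClosed_le ?_ continuous_const
  exact continuous_const.add ((continuous_id.inner continuous_const))

lemma subdiff_bounded (f : E → ℝ) (hcont : Continuous f) (x₀ : E) :
    ∃ R : ℝ, ∀ s ∈ subdiff f x₀, ‖s‖ ≤ R := by
  obtain ⟨M, hM⟩ := (isCompact_closedBall x₀ 1).exists_bound_of_continuousOn
    hcont.continuousOn
  refine ⟨M + ‖f x₀‖, fun s hs => ?_⟩
  rcases eq_or_ne s 0 with rfl | hs0
  · simp only [norm_zero]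
    have := hM x₀ (Metric.mem_closedBall_self zero_le_one)
    have h1 : f x₀ ≤ ‖f x₀‖ := le_abs_self _
    have h2 : -‖f x₀‖ ≤ f x₀ := neg_abs_le _
    calc (0:ℝ) ≤ ‖f x₀‖ + ‖f x₀‖ := by positivity
      _ ≤ M + ‖f x₀‖ := by
          have := le_trans (le_abs_self _) (hM x₀ (Metric.mem_closedBall_self zero_le_one))
          linarith [abs_nonneg (f x₀), le_trans (abs_nonneg (f x₀))
            (hM x₀ (Metric.mem_closedBall_self zero_le_one))]
  · have hy : x₀ + ‖s‖⁻¹ • s ∈ Metric.closedBall x₀ 1 := by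
      simp only [Metric.mem_closedBall, dist_eq_norm, add_sub_cancel_left]
      rw [norm_smul, norm_inv, norm_norm, inv_mul_cancel₀ (norm_ne_zero_iff.2 hs0)]
    have h1 := hs (x₀ + ‖s‖⁻¹ • s)
    rw [add_sub_cancel_left, real_inner_smul_right, real_inner_self_eq_norm_sq] at h1
    have h2 : ‖s‖⁻¹ * ‖s‖^2 = ‖s‖ := by
      have : ‖s‖ ≠ 0 := norm_ne_zero_iff.2 hs0
      field_simp
    rw [h2] at h1
    have h3 : f (x₀ + ‖s‖⁻¹ • s) ≤ M := le_trans (le_abs_self _) (hM _ hy)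
    have h4 : -‖f x₀‖ ≤ f x₀ := neg_abs_le _
    linarith

lemma subdiff_convex (f : E → ℝ) (x₀ : E) : Convex ℝ (subdiff f x₀) := by
  rintro s₁ h₁ s₂ h₂ a b ha hb hab
  intro y
  have e1 := h₁ y
  have e2 := h₂ y
  have : (inner ℝ (a • s₁ + b • s₂) (y - x₀) : ℝ)
      = a * inner ℝ s₁ (y - x₀) + b * inner ℝ s₂ (y - x₀) := by
    rw [inner_add_left, real_inner_smul_left, real_inner_smul_left]
  rw [this]
  have key := add_le_add (mul_le_mul_of_nonneg_left e1 ha) (mul_le_mul_of_nonneg_left e2 hb)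
  have h3 : a * f y + b * f y = f y := by rw [← add_mul, hab, one_mul]
  have h4 : a * (f x₀ + (inner ℝ s₁ (y - x₀) : ℝ)) + b * (f x₀ + (inner ℝ s₂ (y - x₀) : ℝ))
      = (a + b) * f x₀ + (a * inner ℝ s₁ (y - x₀) + b * inner ℝ s₂ (y - x₀)) := by ring
  rw [hab, one_mul] at h4
  rw [h4, h3] at key
  linarith

lemma coneHull_convex {S : Set E} (hS : Convex ℝ S) : Convex ℝ (coneHull S) := by
  rintro v₁ ⟨c₁, hc₁, s₁, hs₁, rfl⟩ v₂ ⟨c₂, hc₂, s₂, hs₂, rfl⟩ a b ha hb hab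
  rcases eq_or_lt_of_le (by positivity : (0:ℝ) ≤ a * c₁ + b * c₂) with h | h
  · have h1 : a * c₁ = 0 := by nlinarith
    have h2 : b * c₂ = 0 := by nlinarith
    refine ⟨0, le_refl 0, s₁, hs₁, ?_⟩
    rw [smul_smul, smul_smul, h1, h2]
    simp
  · set c := a * c₁ + b * c₂
    refine ⟨c, h.le, (a * c₁ / c) • s₁ + (b * c₂ / c) • s₂,
      hS hs₁ hs₂ (by positivity) (by positivity) (by field_simp; rfl), ?_⟩
    have e1 : c * (a * c₁ / c) = a * c₁ := by field_simp
    have e2 : c * (b * c₂ / c) = b * c₂ := by field_simp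
    rw [smul_add, smul_smul, smul_smul, smul_smul, smul_smul, e1, e2]

lemma coneHull_isClosed {S : Set E} (hS : IsCompact S) (h0 : 0 ∉ S) :
    IsClosed (coneHull S) := by
  rcases S.eq_empty_or_nonempty with rfl | hne
  · convert isClosed_empty
    simp [coneHull]
  obtain ⟨s₀, hs₀, hmin⟩ := hS.exists_isMinOn hne continuous_norm.continuousOn
  rw [isMinOn_iff] at hmin
  have hδ : 0 < ‖s₀‖ := norm_pos_iff.2 (fun h => h0 (h ▸ hs₀))
  set δ := ‖s₀‖
  apply isClosed_of_closure_subset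
  intro w hw
  set R := (‖w‖ + 1) / δ
  set KR : Set E := (fun p : ℝ × E => p.1 • p.2) '' (Set.Icc 0 R ×ˢ S)
  have hKRcompact : IsCompact KR :=
    (isCompact_Icc.prod hS).image (continuous_fst.smul continuous_snd)
  have hsub : coneHull S ∩ Metric.ball w 1 ⊆ KR := by
    rintro x ⟨⟨c, hc, s, hs, rfl⟩, hball⟩
    refine ⟨(c, s), ⟨⟨hc, ?_⟩, hs⟩, rfl⟩
    have h1 : ‖c • s‖ ≤ ‖w‖ + 1 := by
      have := norm_sub_norm_le (c • s) w
      have hb : ‖c • s - w‖ < 1 := by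
        rw [← dist_eq_norm]; exact Metric.mem_ball.1 hball
      linarith
    rw [norm_smul, Real.norm_eq_abs, abs_of_nonneg hc] at h1
    have h2 : δ ≤ ‖s‖ := hmin s hs
    rw [le_div_iff₀ hδ]
    nlinarith
  have hwKR : w ∈ KR := by
    have : w ∈ closure (coneHull S ∩ Metric.ball w 1) := by
      rw [mem_closure_iff] at hw ⊢
      intro O hO hwO
      have hO' : IsOpen (O ∩ Metric.ball w 1) := hO.inter Metric.isOpen_ball
      have hwO' : w ∈ O ∩ Metric.ball w 1 := ⟨hwO, Metric.mem_ball_self one_pos⟩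
      obtain ⟨x, hx1, hx2⟩ := hw _ hO' hwO'
      exact ⟨x, hx1.1, hx2, hx1.2⟩
    have := closure_mono hsub this
    rwa [hKRcompact.isClosed.closure_eq] at this
  obtain ⟨⟨c, s⟩, ⟨⟨hc0, _⟩, hs⟩, rfl⟩ := hwKR
  exact ⟨c, hc0, s, hs, rfl⟩

end Stmt7Aux

open Stmt7Aux in
theorem stmt7 {n : ℕ} (f : EuclideanSpace ℝ (Fin n) → ℝ) (hf : ConvexOn ℝ Set.univ f)
    (hcont : Continuous f) (x₀ : EuclideanSpace ℝ (Fin n)) (hmin : ∃ y, f y < f x₀) :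
    polarCone (tangentConeOf {x | f x ≤ f x₀} x₀) = coneHull (subdiff f x₀) := by
  obtain ⟨y, hy⟩ := hmin
  have hne : (subdiff f x₀).Nonempty := by
    by_cases hE : ∃ w : EuclideanSpace ℝ (Fin n), w ≠ 0
    · obtain ⟨w, hw⟩ := hE
      obtain ⟨s, hs, -⟩ := exists_subdiff_inner_eq hf x₀ w hw
      exact ⟨s, hs⟩
    · push_neg at hE
      exact absurd hy (by rw [hE y, hE x₀]; exact lt_irrefl _)
  apply Set.Subset.antisymm
  · -- polar cone of tangent cone ⊆ cone hull of subdifferential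
    intro v hv
    by_contra hvK
    have h0 : (0 : EuclideanSpace ℝ (Fin n)) ∉ subdiff f x₀ := by
      intro h
      have := h y
      simp only [inner_zero_left, add_zero] at this
      exact absurd this (not_le.2 hy)
    have hcompact : IsCompact (subdiff f x₀) := by
      obtain ⟨R, hR⟩ := subdiff_bounded f hcont x₀
      apply Metric.isCompact_of_isClosed_isBounded (subdiff_closed f x₀)
      apply Bornology.IsBounded.subset (Metric.isBounded_closedBall (x := 0) (r := R))
      intro s hs
      simpa [Metric.mem_closedBall] using hR s hs
    obtain ⟨φ, α, hφ1, hφ2⟩ := geometric_hahn_banach_closed_point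
      (coneHull_convex (subdiff_convex f x₀)) (coneHull_isClosed hcompact h0) hvK
    set u : EuclideanSpace ℝ (Fin n) :=
      (InnerProductSpace.toDual ℝ (EuclideanSpace ℝ (Fin n))).symm φ with hu_def
    have hu : ∀ x, (inner ℝ u x : ℝ) = φ x := fun x => InnerProductSpace.toDual_symm_apply
    obtain ⟨s₁, hs₁⟩ := hne
    have hα : 0 < α := by
      have h01 : (0 : EuclideanSpace ℝ (Fin n)) ∈ coneHull (subdiff f x₀) :=
        ⟨0, le_refl 0, s₁, hs₁, by simp⟩
      have := hφ1 0 h01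
      simpa using this
    have hus : ∀ s ∈ subdiff f x₀, (inner ℝ u s : ℝ) ≤ 0 := by
      intro s hs
      by_contra h
      push_neg at h
      set c := (α + 1) / (inner ℝ u s : ℝ) with hc_def
      have hc : 0 < c := by positivity
      have hmem : c • s ∈ coneHull (subdiff f x₀) := ⟨c, hc.le, s, hs, rfl⟩
      have h1 := hφ1 _ hmem
      rw [← hu, inner_smul_right] at h1
      rw [hc_def] at h1
      rw [div_mul_cancel₀ _ h.ne'] at h1
      linarith
    have hddu : dd f x₀ u ≤ 0 := by
      rcases eq_or_ne u 0 with h | h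
      · rw [h, dd_zero]
      · obtain ⟨s, hs, hseq⟩ := exists_subdiff_inner_eq hf x₀ u h
        rw [← hseq, real_inner_comm]
        exact hus s hs
    set d := y - x₀ with hd_def
    have hd : dd f x₀ d < 0 := by
      have h1 : dd f x₀ d ≤ dq f x₀ d 1 := dd_le_dq hf x₀ d one_pos
      have h2 : dq f x₀ d 1 = f y - f x₀ := by
        rw [dq, one_smul, hd_def, add_sub_cancel, div_one]
      rw [h2] at h1
      linarith
    have hT : ∀ ε : ℝ, 0 < ε → u + ε • d ∈ tangentConeOf {x | f x ≤ f x₀} x₀ := by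
      intro ε hε
      have h1 : dd f x₀ (u + ε • d) ≤ dd f x₀ u + dd f x₀ (ε • d) := dd_add hf x₀ u (ε • d)
      rw [dd_smul x₀ d hε] at h1
      have h2 : dd f x₀ (u + ε • d) < 0 := by nlinarith
      obtain ⟨b, hb, hb0⟩ := exists_lt_of_csInf_lt (ddset_nonempty f x₀ (u + ε • d)) h2
      obtain ⟨t, ht, rfl⟩ := hb
      have ht' : (0:ℝ) < t := Set.mem_Ioi.1 ht
      have h3 : f (x₀ + t • (u + ε • d)) < f x₀ := by
        rw [dq, div_neg_iff] at hb0
        rcases hb0 with ⟨h4, h5⟩ | ⟨h4, h5⟩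
        · linarith
        · linarith
      apply subset_closure
      refine ⟨t⁻¹, by positivity, t • (u + ε • d), h3.le, ?_⟩
      rw [smul_smul, inv_mul_cancel₀ ht'.ne', one_smul]
    have hvu : (inner ℝ v u : ℝ) ≤ 0 := by
      by_contra h
      push_neg at h
      have hkey : ∀ ε : ℝ, 0 < ε → (inner ℝ v u : ℝ) + ε * (inner ℝ v d : ℝ) ≤ 0 := by
        intro ε hε
        have := hv _ (hT ε hε)
        rwa [inner_add_right, real_inner_smul_right] at this
      set ε := (inner ℝ v u : ℝ) / (2 * (|(inner ℝ v d : ℝ)| + 1)) with hε_def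
      have hε : 0 < ε := by positivity
      have h2 := hkey ε hε
      have h3 : -(|(inner ℝ v d : ℝ)|) ≤ (inner ℝ v d : ℝ) := neg_abs_le _
      have h4 : ε * (inner ℝ v d : ℝ) ≥ -(ε * |(inner ℝ v d : ℝ)|) := by nlinarith
      have h5 : ε * |(inner ℝ v d : ℝ)| ≤ (inner ℝ v u : ℝ) / 2 := by
        rw [hε_def]
        rw [div_mul_eq_mul_div, div_le_div_iff₀ (by positivity) two_pos]
        nlinarith [abs_nonneg (inner ℝ v d : ℝ)]
      linarith
    have hαv : α < (inner ℝ u v : ℝ) := by rw [hu]; exact hφ2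
    rw [real_inner_comm] at hαv
    linarith
  · -- cone hull of subdifferential ⊆ polar cone of tangent cone
    rintro v ⟨c, hc, s, hs, rfl⟩ w hw
    have hclosed : IsClosed {w : EuclideanSpace ℝ (Fin n) | (inner ℝ (c • s) w : ℝ) ≤ 0} :=
      isClosed_le (continuous_const.inner continuous_id) continuous_const
    have hsubset : {v : EuclideanSpace ℝ (Fin n) |
        ∃ c' : ℝ, 0 ≤ c' ∧ ∃ u, x₀ + u ∈ {x | f x ≤ f x₀} ∧ v = c' • u}
        ⊆ {w : EuclideanSpace ℝ (Fin n) | (inner ℝ (c • s) w : ℝ) ≤ 0} := by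
      rintro w' ⟨c', hc', u, hu, rfl⟩
      have h1 := hs (x₀ + u)
      rw [add_sub_cancel_left] at h1
      have h2 : f (x₀ + u) ≤ f x₀ := hu
      have h3 : (inner ℝ s u : ℝ) ≤ 0 := by linarith
      simp only [Set.mem_setOf_eq, real_inner_smul_left, real_inner_smul_right]
      have : (inner ℝ s u : ℝ) = inner ℝ s u := rfl
      nlinarith [mul_nonneg hc hc']
    exact closure_minimal hsubset hclosed hw
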